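/- Assume moreover that r > 0, that π is concentrated on {(x,y) ∈ Z × Z : ‖x − y‖ ≤ r}, and that π(Z × Z) ≥ 1 − r. Then μ_{1/2} is a Borel probability measure on Z, and the Prokhorov distances satisfy d_P(μ0, μ_{1/2}) ≤ r/2 and d_P(μ1, μ_{1/2}) ≤ r/2. -/

import Mathlib

open MeasureTheory
open scoped ENNReal

/-- The midpoint map `M(x,y) = (x+y)/2` on a real normed space. -/
noncomputable def midMap {Z : Type*} [NormedAddCommGroup Z] [NormedSpace ℝ Z]
    (p : Z × Z) : Z := (2⁻¹ : ℝ) • (p.1 + p.2)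

/-- The measure `μ_{1/2} := M_*π + (1/2)(μ0 − (pr0)_*π) + (1/2)(μ1 − (pr1)_*π)`. -/
noncomputable def muHalf {Z : Type*} [NormedAddCommGroup Z] [NormedSpace ℝ Z]
    [MeasurableSpace Z] (μ0 μ1 : Measure Z) (π : Measure (Z × Z)) : Measure Z :=
  π.map midMap + (2⁻¹ : ℝ≥0∞) • (μ0 - π.map Prod.fst)
    + (2⁻¹ : ℝ≥0∞) • (μ1 - π.map Prod.snd)

lemma midMap_continuous {Z : Type*} [NormedAddCommGroup Z] [NormedSpace ℝ Z] :
    Continuous (midMap (Z := Z)) :=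
  (continuous_fst.add continuous_snd).const_smul _

lemma half_mul_ofReal {r : ℝ} (_hr : 0 ≤ r) :
    (2⁻¹ : ℝ≥0∞) * ENNReal.ofReal r = ENNReal.ofReal (r / 2) := by
  rw [div_eq_mul_inv, mul_comm r, ENNReal.ofReal_mul (by norm_num)]
  congr 1
  rw [show ((2:ℝ)⁻¹) = ((2:ℝ))⁻¹ from rfl, ENNReal.ofReal_inv_of_pos two_pos,
    ENNReal.ofReal_ofNat]

/-- Main auxiliary lemma: the one-sided Prokhorov estimates, formulated for a
generic coordinate projection `f` (either `Prod.fst` or `Prod.snd`). -/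
lemma aux_edist {Z : Type*} [NormedAddCommGroup Z] [NormedSpace ℝ Z]
    [SecondCountableTopology Z] [MeasurableSpace Z] [BorelSpace Z]
    (μ : Measure Z) [IsProbabilityMeasure μ]
    (π : Measure (Z × Z)) (κ : Measure Z)
    (f : Z × Z → Z) (hf : Measurable f)
    (hle : π.map f ≤ μ) [IsFiniteMeasure (π.map f)]
    (r : ℝ) (hr : 0 < r)
    (hconc : π {p : Z × Z | r < ‖p.1 - p.2‖} = 0)
    (hfd : ∀ p : Z × Z, dist (f p) (midMap p) = ‖p.1 - p.2‖ / 2)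
    (hκ : κ Set.univ ≤ ENNReal.ofReal (r / 2))
    (hrem : μ Set.univ - (π.map f) Set.univ ≤ ENNReal.ofReal r) :
    levyProkhorovEDist μ (π.map midMap + (2⁻¹ : ℝ≥0∞) • (μ - π.map f) + κ)
      ≤ ENNReal.ofReal (r / 2) := by
  have hmid : Measurable (midMap (Z := Z)) := midMap_continuous.measurable
  set ν : Measure Z := π.map f with hν
  set rem : Measure Z := μ - ν with hremdef
  set m : Measure Z := π.map midMap with hm
  set bad : Set (Z × Z) := {p : Z × Z | r < ‖p.1 - p.2‖} with hbad
  have key : ∀ s : Set Z, MeasurableSet s → μ s = ν s + rem s := by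
    intro s hs
    rw [hremdef, Measure.sub_apply hs hle]
    exact (add_tsub_cancel_of_le (Measure.le_iff'.1 hle s)).symm
  have hremuniv : rem Set.univ ≤ ENNReal.ofReal r := by
    rw [hremdef, Measure.sub_apply MeasurableSet.univ hle]
    exact hrem
  apply levyProkhorovEDist_le_of_forall
  intro ε B hε hεtop hB
  have hε2 : r / 2 < ε.toReal :=
    (ENNReal.ofReal_lt_iff_lt_toReal (by positivity) hεtop.ne).1 hε
  set T : Set Z := Metric.thickening ε.toReal B with hT
  have hTm : MeasurableSet T := Metric.isOpen_thickening.measurableSet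
  have hBT : B ⊆ T := Metric.self_subset_thickening (by linarith) B
  have hεle : ENNReal.ofReal (r / 2) ≤ ε := hε.le
  -- the half-sum identity for rem
  have hμh : ∀ s : Set Z,
      (m + (2⁻¹ : ℝ≥0∞) • rem + κ) s = m s + 2⁻¹ * rem s + κ s := by
    intro s
    simp [Measure.add_apply, Measure.smul_apply, smul_eq_mul]
  constructor
  · -- μ B ≤ μh T + ε
    have hsub : f ⁻¹' B ⊆ midMap ⁻¹' T ∪ bad := by
      intro p hp
      by_cases hg : r < ‖p.1 - p.2‖
      · exact Or.inr hg
      · left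
        refine Metric.mem_thickening_iff.2 ⟨f p, hp, ?_⟩
        rw [dist_comm, hfd p]
        push_neg at hg
        linarith
    have h1 : ν B ≤ m T := by
      rw [hν, Measure.map_apply hf hB, hm, Measure.map_apply hmid hTm]
      calc π (f ⁻¹' B) ≤ π (midMap ⁻¹' T ∪ bad) := measure_mono hsub
        _ ≤ π (midMap ⁻¹' T) + π bad := measure_union_le _ _
        _ = π (midMap ⁻¹' T) := by rw [hconc, add_zero]
    have hsplit : rem B = 2⁻¹ * rem B + 2⁻¹ * rem B := by
      rw [← add_mul, show (2⁻¹ : ℝ≥0∞) + 2⁻¹ = 1 by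
        rw [← two_mul, ENNReal.mul_inv_cancel (by norm_num) (by norm_num)], one_mul]
    have h2 : rem B ≤ 2⁻¹ * rem T + ε := by
      rw [hsplit]
      refine add_le_add ?_ ?_
      · exact mul_le_mul_of_nonneg_left (measure_mono hBT) zero_le
      · calc 2⁻¹ * rem B ≤ 2⁻¹ * rem Set.univ :=
              mul_le_mul_of_nonneg_left (measure_mono (Set.subset_univ _)) zero_le
          _ ≤ 2⁻¹ * ENNReal.ofReal r := mul_le_mul_of_nonneg_left hremuniv zero_le
          _ = ENNReal.ofReal (r / 2) := half_mul_ofReal hr.le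
          _ ≤ ε := hεle
    calc μ B = ν B + rem B := key B hB
      _ ≤ m T + (2⁻¹ * rem T + ε) := add_le_add h1 h2
      _ = (m T + 2⁻¹ * rem T) + ε := by rw [← add_assoc]
      _ ≤ ((m T + 2⁻¹ * rem T) + κ T) + ε := add_le_add le_self_add le_rfl
      _ = (m + (2⁻¹ : ℝ≥0∞) • rem + κ) T + ε := by rw [hμh]
  · -- μh B ≤ μ T + ε
    have hsub : midMap ⁻¹' B ⊆ f ⁻¹' T ∪ bad := by
      intro p hp
      by_cases hg : r < ‖p.1 - p.2‖
      · exact Or.inr hg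
      · left
        refine Metric.mem_thickening_iff.2 ⟨midMap p, hp, ?_⟩
        rw [hfd p]
        push_neg at hg
        linarith
    have h1 : m B ≤ ν T := by
      rw [hν, Measure.map_apply hf hTm, hm, Measure.map_apply hmid hB]
      calc π (midMap ⁻¹' B) ≤ π (f ⁻¹' T ∪ bad) := measure_mono hsub
        _ ≤ π (f ⁻¹' T) + π bad := measure_union_le _ _
        _ = π (f ⁻¹' T) := by rw [hconc, add_zero]
    have h2 : 2⁻¹ * rem B ≤ rem T := by
      calc 2⁻¹ * rem B ≤ 1 * rem B := by gcongr; norm_num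
        _ = rem B := one_mul _
        _ ≤ rem T := measure_mono hBT
    have h3 : κ B ≤ ε := by
      calc κ B ≤ κ Set.univ := measure_mono (Set.subset_univ _)
        _ ≤ ENNReal.ofReal (r / 2) := hκ
        _ ≤ ε := hεle
    calc (m + (2⁻¹ : ℝ≥0∞) • rem + κ) B = m B + 2⁻¹ * rem B + κ B := hμh B
      _ ≤ ν T + rem T + ε := by gcongr
      _ = μ T + ε := by rw [← key T hTm]

lemma dist_fst_midMap {Z : Type*} [NormedAddCommGroup Z] [NormedSpace ℝ Z]
    (p : Z × Z) : dist p.1 (midMap p) = ‖p.1 - p.2‖ / 2 := by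
  rw [dist_eq_norm, show p.1 - midMap p = (2⁻¹ : ℝ) • (p.1 - p.2) by
    simp only [midMap]; module, norm_smul]
  simp [abs_of_pos]
  ring

lemma dist_snd_midMap {Z : Type*} [NormedAddCommGroup Z] [NormedSpace ℝ Z]
    (p : Z × Z) : dist p.2 (midMap p) = ‖p.1 - p.2‖ / 2 := by
  rw [dist_eq_norm, show p.2 - midMap p = (2⁻¹ : ℝ) • (p.2 - p.1) by
    simp only [midMap]; module, norm_smul, norm_sub_rev p.2 p.1]
  simp [abs_of_pos]
  ring

/-- Let `Z` be a separable real Banach space, `μ0`, `μ1` Borel probability measures on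
`Z`, and `π` a Borel measure on `Z × Z` with `(pr0)_*π ≤ μ0`, `(pr1)_*π ≤ μ1`. Assume
`r > 0`, `π` is concentrated on `{‖x − y‖ ≤ r}`, and `π(Z × Z) ≥ 1 − r`. Then
`μ_{1/2}` is a probability measure, and the (Lévy–)Prokhorov distances satisfy
`d_P(μ0, μ_{1/2}) ≤ r/2` and `d_P(μ1, μ_{1/2}) ≤ r/2`. -/
theorem muHalf_prokhorov_close
    (Z : Type*) [NormedAddCommGroup Z] [NormedSpace ℝ Z] [CompleteSpace Z]
    [SecondCountableTopology Z] [MeasurableSpace Z] [BorelSpace Z]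
    (μ0 μ1 : Measure Z) [IsProbabilityMeasure μ0] [IsProbabilityMeasure μ1]
    (π : Measure (Z × Z))
    (hπ0 : π.map Prod.fst ≤ μ0) (hπ1 : π.map Prod.snd ≤ μ1)
    (r : ℝ) (hr : 0 < r)
    (hconc : π {p : Z × Z | r < ‖p.1 - p.2‖} = 0)
    (hdef : 1 - r ≤ (π Set.univ).toReal) :
    IsProbabilityMeasure (muHalf μ0 μ1 π) ∧
    levyProkhorovDist μ0 (muHalf μ0 μ1 π) ≤ r / 2 ∧
    levyProkhorovDist μ1 (muHalf μ0 μ1 π) ≤ r / 2 := by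
  have hmid : Measurable (midMap (Z := Z)) := midMap_continuous.measurable
  have hmap0 : π.map Prod.fst Set.univ = π Set.univ := by
    rw [Measure.map_apply measurable_fst MeasurableSet.univ, Set.preimage_univ]
  have hmap1 : π.map Prod.snd Set.univ = π Set.univ := by
    rw [Measure.map_apply measurable_snd MeasurableSet.univ, Set.preimage_univ]
  have hπ1univ : π Set.univ ≤ 1 := by
    calc π Set.univ = π.map Prod.fst Set.univ := hmap0.symm
      _ ≤ μ0 Set.univ := Measure.le_iff'.1 hπ0 _
      _ = 1 := measure_univ
  haveI : IsFiniteMeasure π := ⟨lt_of_le_of_lt hπ1univ (by norm_num)⟩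
  haveI : IsFiniteMeasure (π.map Prod.fst) := Measure.isFiniteMeasure_map π _
  haveI : IsFiniteMeasure (π.map Prod.snd) := Measure.isFiniteMeasure_map π _
  have hπtop : π Set.univ ≠ ∞ := (lt_of_le_of_lt hπ1univ (by norm_num)).ne
  have hrem : (1 : ℝ≥0∞) - π Set.univ ≤ ENNReal.ofReal r := by
    rw [tsub_le_iff_right]
    calc (1 : ℝ≥0∞) = ENNReal.ofReal 1 := by simp
      _ ≤ ENNReal.ofReal (r + (π Set.univ).toReal) := by
          apply ENNReal.ofReal_le_ofReal; linarith
      _ = ENNReal.ofReal r + ENNReal.ofReal (π Set.univ).toReal := by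
          rw [ENNReal.ofReal_add hr.le ENNReal.toReal_nonneg]
      _ = ENNReal.ofReal r + π Set.univ := by rw [ENNReal.ofReal_toReal hπtop]
  have hrem0 : μ0 Set.univ - (π.map Prod.fst) Set.univ ≤ ENNReal.ofReal r := by
    rw [measure_univ, hmap0]; exact hrem
  have hrem1 : μ1 Set.univ - (π.map Prod.snd) Set.univ ≤ ENNReal.ofReal r := by
    rw [measure_univ, hmap1]; exact hrem
  -- the leftover measures
  have hA0univ : ((2⁻¹ : ℝ≥0∞) • (μ0 - π.map Prod.fst)) Set.univ
      ≤ ENNReal.ofReal (r / 2) := by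
    rw [Measure.smul_apply, smul_eq_mul, Measure.sub_apply MeasurableSet.univ hπ0]
    calc 2⁻¹ * (μ0 Set.univ - (π.map Prod.fst) Set.univ)
        ≤ 2⁻¹ * ENNReal.ofReal r := by gcongr
      _ = ENNReal.ofReal (r / 2) := half_mul_ofReal hr.le
  have hA1univ : ((2⁻¹ : ℝ≥0∞) • (μ1 - π.map Prod.snd)) Set.univ
      ≤ ENNReal.ofReal (r / 2) := by
    rw [Measure.smul_apply, smul_eq_mul, Measure.sub_apply MeasurableSet.univ hπ1]
    calc 2⁻¹ * (μ1 Set.univ - (π.map Prod.snd) Set.univ)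
        ≤ 2⁻¹ * ENNReal.ofReal r := by gcongr
      _ = ENNReal.ofReal (r / 2) := half_mul_ofReal hr.le
  -- probability measure
  have hprob : IsProbabilityMeasure (muHalf μ0 μ1 π) := by
    constructor
    have hmapm : (π.map midMap) Set.univ = π Set.univ := by
      rw [Measure.map_apply hmid MeasurableSet.univ, Set.preimage_univ]
    have h0 : ((2⁻¹ : ℝ≥0∞) • (μ0 - π.map Prod.fst)) Set.univ
        = 2⁻¹ * (1 - π Set.univ) := by
      rw [Measure.smul_apply, smul_eq_mul, Measure.sub_apply MeasurableSet.univ hπ0,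
        measure_univ, hmap0]
    have h1 : ((2⁻¹ : ℝ≥0∞) • (μ1 - π.map Prod.snd)) Set.univ
        = 2⁻¹ * (1 - π Set.univ) := by
      rw [Measure.smul_apply, smul_eq_mul, Measure.sub_apply MeasurableSet.univ hπ1,
        measure_univ, hmap1]
    have : muHalf μ0 μ1 π Set.univ
        = π Set.univ + (2⁻¹ * (1 - π Set.univ) + 2⁻¹ * (1 - π Set.univ)) := by
      simp only [muHalf, Measure.add_apply, h0, h1, hmapm, add_assoc]
    rw [this, ← add_mul]
    have h2 : (2⁻¹ : ℝ≥0∞) + 2⁻¹ = 1 := by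
      rw [← two_mul, ENNReal.mul_inv_cancel (by norm_num) (by norm_num)]
    rw [h2, one_mul, add_tsub_cancel_of_le hπ1univ]
  refine ⟨hprob, ?_, ?_⟩
  · have := aux_edist μ0 π ((2⁻¹ : ℝ≥0∞) • (μ1 - π.map Prod.snd)) Prod.fst
      measurable_fst hπ0 r hr hconc dist_fst_midMap hA1univ hrem0
    rw [show π.map midMap + (2⁻¹ : ℝ≥0∞) • (μ0 - π.map Prod.fst)
        + (2⁻¹ : ℝ≥0∞) • (μ1 - π.map Prod.snd) = muHalf μ0 μ1 π from rfl] at this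
    calc levyProkhorovDist μ0 (muHalf μ0 μ1 π)
        ≤ (ENNReal.ofReal (r / 2)).toReal :=
          ENNReal.toReal_mono ENNReal.ofReal_ne_top this
      _ = r / 2 := ENNReal.toReal_ofReal (by positivity)
  · have := aux_edist μ1 π ((2⁻¹ : ℝ≥0∞) • (μ0 - π.map Prod.fst)) Prod.snd
      measurable_snd hπ1 r hr hconc dist_snd_midMap hA0univ hrem1
    rw [show π.map midMap + (2⁻¹ : ℝ≥0∞) • (μ1 - π.map Prod.snd)
        + (2⁻¹ : ℝ≥0∞) • (μ0 - π.map Prod.fst) = muHalf μ0 μ1 π from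
      add_right_comm _ _ _] at this
    calc levyProkhorovDist μ1 (muHalf μ0 μ1 π)
        ≤ (ENNReal.ofReal (r / 2)).toReal :=
          ENNReal.toReal_mono ENNReal.ofReal_ne_top this
      _ = r / 2 := ENNReal.toReal_ofReal (by positivity)
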